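/- Let A be a symmetric real n×n matrix. Suppose that for every probability vector p (p ≥ 0 entrywise, entries summing to 1) there exists an index i with p_i > 0 and (Ap)_i > 0. Then qᵀAq > 0 for every probability vector q. -/

import Mathlib

open Matrix

-- symmetry swap
lemma dot_symm {n : ℕ} (A : Matrix (Fin n) (Fin n) ℝ) (hA : A.IsSymm)
    (x y : Fin n → ℝ) : x ⬝ᵥ A.mulVec y = y ⬝ᵥ A.mulVec x := by
  rw [Matrix.dotProduct_mulVec, ← Matrix.mulVec_transpose, hA.eq, dotProduct_comm]

lemma cont_quad {n : ℕ} (A : Matrix (Fin n) (Fin n) ℝ) :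
    Continuous fun p : Fin n → ℝ => p ⬝ᵥ A.mulVec p := by
  simp only [Matrix.mulVec, dotProduct]
  exact continuous_finset_sum _ fun i _ =>
    (continuous_apply i).mul (continuous_finset_sum _ fun j _ =>
      (continuous_const.mul (continuous_apply j)))

theorem stmt_3 {n : ℕ} (A : Matrix (Fin n) (Fin n) ℝ) (hA : A.IsSymm)
    (h : ∀ p : Fin n → ℝ, (∀ i, 0 ≤ p i) → ∑ i, p i = 1 →
      ∃ i, 0 < p i ∧ 0 < A.mulVec p i) :
    ∀ q : Fin n → ℝ, (∀ i, 0 ≤ q i) → ∑ i, q i = 1 →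
      0 < q ⬝ᵥ A.mulVec q := by
  intro q hq0 hq1
  set f : (Fin n → ℝ) → ℝ := fun p => p ⬝ᵥ A.mulVec p with hf
  have hqS : q ∈ stdSimplex ℝ (Fin n) := ⟨hq0, hq1⟩
  obtain ⟨m, hmS, hmin⟩ := (isCompact_stdSimplex ℝ (Fin n)).exists_isMinOn ⟨q, hqS⟩
    (cont_quad A).continuousOn
  have hmin' := isMinOn_iff.mp hmin
  -- suffices to show f m > 0
  have key : 0 < f m := by
    by_contra hle
    push_neg at hle
    obtain ⟨hm0, hm1⟩ := hmS
    obtain ⟨i, hpi, hApi⟩ := h m hm0 hm1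
    -- find j with m j > 0 and (A m) j < 0
    have hsum : f m = ∑ k, m k * A.mulVec m k := rfl
    have hj : ∃ j, m j * A.mulVec m j < 0 := by
      by_contra hc
      push_neg at hc
      have : m i * A.mulVec m i ≤ ∑ k, m k * A.mulVec m k :=
        Finset.single_le_sum (fun k _ => hc k) (Finset.mem_univ i)
      rw [← hsum] at this
      have := lt_of_lt_of_le (mul_pos hpi hApi) this
      linarith
    obtain ⟨j, hj⟩ := hj
    have hmj : 0 < m j := by
      rcases lt_or_eq_of_le (hm0 j) with h' | h'
      · exact h'
      · exfalso; rw [← h'] at hj; simp at hj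
    have hAmj : A.mulVec m j < 0 := by
      by_contra hc; push_neg at hc
      exact absurd (mul_nonneg (hm0 j) hc) (not_le.mpr hj)
    have hij : i ≠ j := fun e => by rw [e] at hApi; linarith
    -- perturbation vector
    set v : Fin n → ℝ := fun k => (if k = j then (1:ℝ) else 0) - (if k = i then 1 else 0) with hv
    have hvdot : ∀ w : Fin n → ℝ, v ⬝ᵥ w = w j - w i := by
      intro w
      simp [hv, dotProduct, sub_mul, ite_mul, Finset.sum_sub_distrib]
    have hdotv : ∀ w : Fin n → ℝ, w ⬝ᵥ v = w j - w i := by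
      intro w
      rw [dotProduct_comm]; exact hvdot w
    have hvsum : ∑ k, v k = 0 := by
      simp [hv, Finset.sum_sub_distrib]
    set d : ℝ := A.mulVec m j - A.mulVec m i with hd
    have hdneg : d < 0 := by rw [hd]; linarith
    set c : ℝ := v ⬝ᵥ A.mulVec v with hc
    set t : ℝ := min (m i) (-d / (|c| + 1)) with ht
    have hcpos : (0:ℝ) < |c| + 1 := by positivity
    have htpos : 0 < t := lt_min hpi (div_pos (by linarith) hcpos)
    have htmi : t ≤ m i := min_le_left _ _
    have htd : t ≤ -d / (|c| + 1) := min_le_right _ _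
    -- quadratic expansion
    set q' : Fin n → ℝ := m + t • v with hq'
    have hexp : f q' = f m + 2 * t * d + t^2 * c := by
      rw [hf]
      simp only [hq', Matrix.mulVec_add, Matrix.mulVec_smul, dotProduct_add,
        add_dotProduct, smul_dotProduct, dotProduct_smul, smul_eq_mul]
      have h1 : m ⬝ᵥ A.mulVec v = v ⬝ᵥ A.mulVec m := dot_symm A hA m v
      have h2 : v ⬝ᵥ A.mulVec m = d := by rw [hvdot, hd]
      rw [h1, h2]
      ring
    have hfq' : f q' < f m := by
      have hc2 : t^2 * c < t * (-d) := by
        have h1 : t^2 * c ≤ t^2 * |c| := by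
          have := le_abs_self c
          nlinarith [sq_nonneg t]
        have h2 : t * |c| < -d := by
          have : t * (|c| + 1) ≤ -d := by
            rw [← le_div_iff₀ hcpos] at *; exact htd
          nlinarith
        calc t^2 * c ≤ t^2 * |c| := h1
          _ = t * (t * |c|) := by ring
          _ < t * (-d) := by
              apply mul_lt_mul_of_pos_left h2 htpos
      rw [hexp]
      nlinarith
    have hq'S : q' ∈ stdSimplex ℝ (Fin n) := by
      constructor
      · intro k
        simp only [hq', Pi.add_apply, Pi.smul_apply, smul_eq_mul, hv]
        by_cases hk : k = i
        · subst hk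
          simp [if_neg hij]
          linarith
        · by_cases hk2 : k = j
          · subst hk2
            simp [if_neg hk]
            nlinarith [hm0 k]
          · simp [hk, hk2]
            exact hm0 k
      · simp only [hq', Pi.add_apply, Pi.smul_apply, smul_eq_mul]
        rw [Finset.sum_add_distrib, hm1, ← Finset.mul_sum, hvsum]
        ring
    exact absurd (hmin' q' hq'S) (not_le.mpr hfq')
  exact lt_of_lt_of_le key (hmin' q hqS)
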